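/- Every Cayley-Dickson loop Q_n is Hamiltonian: every subloop S of Q_n is normal, i.e., for all x, y ∈ Q_n and s ∈ S: xS = Sx, (xS)y = x(Sy), and x(yS) = (xy)S. -/

import Mathlib

/-- The underlying set of the Cayley-Dickson loop `Q n`:
`Q 0 = {±1}` (encoded as `Bool`, `false = 1`, `true = -1`) and `Q (n+1) = Q n × Bool`,
an element `(x, b)` encoding `(x, 0)` if `b = false` and `(x, 1)` if `b = true`. -/
def Q : ℕ → Type
  | 0 => Bool
  | n+1 => Q n × Bool

namespace Q

def one : ∀ n, Q n
  | 0 => false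
  | n+1 => (one n, false)

def neg : ∀ n, Q n → Q n
  | 0, x => !x
  | n+1, (x, b) => (neg n x, b)

def conj : ∀ n, Q n → Q n
  | 0, x => x
  | n+1, (x, false) => (conj n x, false)
  | n+1, (x, true) => (neg n x, true)

/-- Cayley-Dickson doubling multiplication restricted to the loop:
`(x,0)(y,0) = (xy,0)`, `(x,0)(y,1) = (yx,1)`, `(x,1)(y,0) = (xy*,1)`, `(x,1)(y,1) = (-y*x,0)`. -/
def mul : ∀ n, Q n → Q n → Q n
  | 0, x, y => xor x y
  | n+1, (x, false), (y, false) => (mul n x y, false)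
  | n+1, (x, false), (y, true)  => (mul n y x, true)
  | n+1, (x, true),  (y, false) => (mul n x (conj n y), true)
  | n+1, (x, true),  (y, true)  => (neg n (mul n (conj n y) x), false)

instance (n : ℕ) : One (Q n) := ⟨one n⟩
instance (n : ℕ) : Neg (Q n) := ⟨neg n⟩
instance (n : ℕ) : Mul (Q n) := ⟨mul n⟩
instance (n : ℕ) : Star (Q n) := ⟨conj n⟩
/-- In `Q n` the inverse of `x` is its conjugate `x*`. -/
instance (n : ℕ) : Inv (Q n) := ⟨conj n⟩

instance instDecEq : ∀ n, DecidableEq (Q n)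
  | 0 => inferInstanceAs (DecidableEq Bool)
  | n+1 => letI := instDecEq n; inferInstanceAs (DecidableEq (Q n × Bool))

instance instFintype : ∀ n, Fintype (Q n)
  | 0 => inferInstanceAs (Fintype Bool)
  | n+1 => letI := instFintype n; inferInstanceAs (Fintype (Q n × Bool))

/-- Powers in `Q n` (well defined by diassociativity). -/
def pow {n : ℕ} (x : Q n) : ℕ → Q n
  | 0 => 1
  | k+1 => x * pow x k

/-- The embedding `x ↦ (x, 0)` of `Q n` into `Q (n+1)`. -/
def up {n : ℕ} (x : Q n) : Q (n+1) := (x, false)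

/-- The map `x ↦ (x, 1)` from `Q n` into `Q (n+1)`. -/
def up1 {n : ℕ} (x : Q n) : Q (n+1) := (x, true)

/-- The commutator `[x,y]`, defined by `xy = (yx)[x,y]`. -/
def comm {n : ℕ} (x y : Q n) : Q n := (y * x)⁻¹ * (x * y)

/-- The associator `[x,y,z]`, defined by `(xy)z = (x(yz))[x,y,z]`. -/
def assoc {n : ℕ} (x y z : Q n) : Q n := (x * (y * z))⁻¹ * ((x * y) * z)

/-- A subloop of the Cayley-Dickson loop `Q n`: a subset containing `1` and closed
under multiplication and inverses (= conjugates). -/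
structure Subloop (n : ℕ) where
  carrier : Set (Q n)
  one_mem : (1 : Q n) ∈ carrier
  mul_mem : ∀ ⦃x y : Q n⦄, x ∈ carrier → y ∈ carrier → x * y ∈ carrier
  inv_mem : ∀ ⦃x : Q n⦄, x ∈ carrier → x⁻¹ ∈ carrier

/-- The subloop of `Q n` generated by a set `s`. -/
def closure (n : ℕ) (s : Set (Q n)) : Set (Q n) :=
  ⋂₀ {t : Set (Q n) | s ⊆ t ∧ (1 : Q n) ∈ t ∧
      (∀ x ∈ t, ∀ y ∈ t, x * y ∈ t) ∧ (∀ x ∈ t, x⁻¹ ∈ t)}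

end Q

namespace Q

theorem neg_neg' : ∀ n (x : Q n), neg n (neg n x) = x
  | 0, x => Bool.not_not x
  | n+1, (x, b) => by simp [neg, neg_neg' n x] <;> rfl

theorem conj_one' : ∀ n, conj n (one n) = one n
  | 0 => rfl
  | n+1 => by simp [conj, one, conj_one' n] <;> rfl

theorem one_mul_mul_one : ∀ n (x : Q n), mul n (one n) x = x ∧ mul n x (one n) = x
  | 0, x => match x with
    | false => ⟨rfl, rfl⟩
    | true => ⟨rfl, rfl⟩
  | n+1, (x, b) => by
    obtain ⟨h1, h2⟩ := one_mul_mul_one n x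
    cases b <;> simp [mul, one, conj_one', h1, h2] <;> rfl

theorem one_mul' (n) (x : Q n) : mul n (one n) x = x := (one_mul_mul_one n x).1
theorem mul_one' (n) (x : Q n) : mul n x (one n) = x := (one_mul_mul_one n x).2

theorem conj_neg' : ∀ n (x : Q n), conj n (neg n x) = neg n (conj n x)
  | 0, _ => rfl
  | n+1, (x, b) => by cases b <;> simp [conj, neg, conj_neg' n x] <;> rfl

theorem negmul : ∀ n (x y : Q n),
    mul n (neg n x) y = neg n (mul n x y) ∧ mul n x (neg n y) = neg n (mul n x y)
  | 0, x, y => match x, y with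
    | false, false => ⟨rfl, rfl⟩
    | false, true => ⟨rfl, rfl⟩
    | true, false => ⟨rfl, rfl⟩
    | true, true => ⟨rfl, rfl⟩
  | n+1, (x, b), (y, b') => by
    cases b <;> cases b' <;>
      simp [mul, neg, conj_neg', neg_neg',
        (negmul n x y).1, (negmul n x y).2,
        (negmul n y x).1, (negmul n y x).2,
        (negmul n x (conj n y)).1, (negmul n x (conj n y)).2,
        (negmul n (conj n y) x).1, (negmul n (conj n y) x).2] <;> rfl

theorem neg_mul' (n) (x y : Q n) : mul n (neg n x) y = neg n (mul n x y) := (negmul n x y).1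
theorem mul_neg' (n) (x y : Q n) : mul n x (neg n y) = neg n (mul n x y) := (negmul n x y).2

/-- `x* = ±x`. -/
theorem conj_or : ∀ n (x : Q n), conj n x = x ∨ conj n x = neg n x
  | 0, x => Or.inl rfl
  | n+1, (x, b) => by
    cases b
    · rcases conj_or n x with h | h
      · exact Or.inl (by simp [conj, h] <;> rfl)
      · exact Or.inr (by simp [conj, neg, h] <;> rfl)
    · exact Or.inr rfl

/-- sign-equivalence -/
def R {n : ℕ} (a b : Q n) : Prop := a = b ∨ a = neg n b

theorem R.refl {n} (a : Q n) : R a a := Or.inl rfl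

theorem R.symm {n} {a b : Q n} (h : R a b) : R b a := by
  rcases h with h | h
  · exact Or.inl h.symm
  · exact Or.inr (by rw [h, neg_neg'])

theorem R.trans {n} {a b c : Q n} (h : R a b) (h' : R b c) : R a c := by
  rcases h with h | h <;> rcases h' with h' | h' <;> simp [R, h, h', neg_neg']

theorem R.negl {n} {a b : Q n} (h : R a b) : R (neg n a) b := by
  rcases h with h | h
  · exact Or.inr (by rw [h])
  · exact Or.inl (by rw [h, neg_neg'])

theorem R.negr {n} {a b : Q n} (h : R a b) : R a (neg n b) := (h.symm.negl).symm

theorem R.mull {n} {a b : Q n} (c : Q n) (h : R a b) : R (mul n c a) (mul n c b) := by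
  rcases h with h | h
  · exact Or.inl (by rw [h])
  · exact Or.inr (by rw [h, mul_neg'])

theorem R.mulr {n} {a b : Q n} (c : Q n) (h : R a b) : R (mul n a c) (mul n b c) := by
  rcases h with h | h
  · exact Or.inl (by rw [h])
  · exact Or.inr (by rw [h, neg_mul'])

theorem R.conj {n} (a : Q n) : R (conj n a) a := conj_or n a

theorem R.pair {n} {a b : Q n} (h : R a b) (c : Bool) :
    R (n := n+1) (a, c) (b, c) := by
  rcases h with h | h
  · exact Or.inl (by rw [h])
  · exact Or.inr (by rw [h]; rfl)

theorem comm2 : ∀ n (x y : Q n), R (mul n x y) (mul n y x)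
  | 0, x, y => match x, y with
    | false, false => Or.inl rfl
    | false, true => Or.inl rfl
    | true, false => Or.inl rfl
    | true, true => Or.inl rfl
  | n+1, (x, b), (y, b') => by
    cases b <;> cases b'
    · exact R.pair (comm2 n x y) false
    · exact R.pair ((R.conj x).symm.mull y) true
    · exact R.pair ((R.conj y).mull x) true
    · exact R.pair ((((R.conj y).mulr x).trans
        ((comm2 n y x).trans ((R.conj x).symm.mulr y))).negl.negr) false

theorem patB {n} (hA : ∀ a b c : Q n, R (mul n (mul n a b) c) (mul n a (mul n b c)))
    (x y z : Q n) : R (mul n z (mul n x y)) (mul n (mul n z y) x) :=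
  (((comm2 n x y).mull z).trans (hA z y x).symm)

theorem patC {n} (hA : ∀ a b c : Q n, R (mul n (mul n a b) c) (mul n a (mul n b c)))
    (x y z : Q n) : R (mul n (mul n y x) z) (mul n (mul n y z) x) :=
  ((hA y x z).trans ((comm2 n x z).mull y)).trans (hA y z x).symm

theorem patD {n} (hA : ∀ a b c : Q n, R (mul n (mul n a b) c) (mul n a (mul n b c)))
    (x y z : Q n) : R (mul n z (mul n y x)) (mul n x (mul n z y)) :=
  (hA z y x).symm.trans (comm2 n _ x)

theorem assoc2 : ∀ n (x y z : Q n), R (mul n (mul n x y) z) (mul n x (mul n y z))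
  | 0, x, y, z => Or.inl (by
      show xor (xor x y) z = xor x (xor y z)
      exact Bool.xor_assoc x y z)
  | n+1, (x, b1), (y, b2), (z, b3) => by
    have hA := assoc2 n
    cases b1 <;> cases b2 <;> cases b3
    -- 000
    · exact R.pair (hA x y z) false
    -- 001
    · exact R.pair (patB hA x y z) true
    -- 010
    · exact R.pair (patC hA x y (conj n z)) true
    -- 011
    · exact R.pair ((patD hA x y (conj n z)).negl.trans
        (((R.refl (mul n (conj n z) y)).negl.mull x).symm)) false
    -- 100
    · exact R.pair (((((R.conj y).mull x).mulr (conj n z)).trans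
        ((((R.conj z).mull (mul n x y)).trans (hA x y z)).trans
          ((R.conj (mul n y z)).mull x).symm)) ) true
    -- 101
    · exact R.pair (((((((R.conj y).mull x).mull (conj n z)).trans
        ((R.conj z).mulr (mul n x y))).trans (patB hA x y z)).trans
          ((R.conj (mul n z y)).symm.mulr x)).negl.negr) false
    -- 110
    · have h0 : R (mul n (neg n (mul n (conj n y) x)) z)
          (mul n (mul n (conj n y) x) z) := ((R.refl _).negl).mulr z
      have h1 := ((R.conj y).mulr x).mulr z
      have h3 : R (mul n (mul n y z) x) (mul n (mul n y (conj n z)) x) :=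
        ((R.conj z).symm.mull y).mulr x
      have h4 : R (mul n (mul n y (conj n z)) x)
          (mul n (conj n (mul n y (conj n z))) x) := ((R.conj _).symm).mulr x
      exact R.pair (((((h0.trans h1).trans (patC hA x y z)).trans h3).trans h4).negr) false
    -- 111
    · refine R.pair ?_ true
      have h1 : R (mul n z (neg n (mul n (conj n y) x))) (mul n z (mul n y x)) :=
        ((R.refl (mul n (conj n y) x)).negl.trans ((R.conj y).mulr x)).mull z
      have h2 : R (mul n x (mul n z y))
          (mul n x (conj n (neg n (mul n (conj n z) y)))) :=
        (((R.conj (neg n (mul n (conj n z) y))).trans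
          ((R.refl (mul n (conj n z) y)).negl.trans ((R.conj z).mulr y))).mull x).symm
      exact (h1.trans (patD hA x y z)).trans h2

/-- `x* x = 1`. -/
theorem conj_mul_self : ∀ n (x : Q n), mul n (conj n x) x = one n
  | 0, x => Bool.xor_self x
  | n+1, (x, b) => by
    cases b
    · show (mul n (conj n x) x, false) = (one n, false)
      rw [conj_mul_self]
    · show (neg n (mul n (conj n x) (neg n x)), false) = (one n, false)
      rw [mul_neg', conj_mul_self, neg_neg']

/-- Every element is `1`, `-1`, or squares to `-1`. -/
theorem sq : ∀ n (x : Q n), x = one n ∨ x = neg n (one n) ∨ mul n x x = neg n (one n)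
  | 0, x => match x with
    | false => Or.inl rfl
    | true => Or.inr (Or.inl rfl)
  | n+1, (x, b) => by
    cases b
    · rcases sq n x with h | h | h
      · exact Or.inl (by simp [one, h] <;> rfl)
      · exact Or.inr (Or.inl (by simp [one, neg, h] <;> rfl))
      · exact Or.inr (Or.inr (by simp [mul, one, neg, h] <;> rfl))
    · refine Or.inr (Or.inr ?_)
      show (neg n (mul n (conj n x) x), false) = (neg n (one n), false)
      rw [conj_mul_self]


/-- If `s² = -1` then `-s` lies in any subloop containing `s`. -/
theorem neg_mem_of {n : ℕ} (S : Subloop n) {s : Q n} (hs : s ∈ S.carrier)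
    (h : mul n s s = neg n (one n)) : neg n s ∈ S.carrier := by
  have hm : s * s * s ∈ S.carrier := S.mul_mem (S.mul_mem hs hs) hs
  have he : s * s * s = neg n s := by
    show mul n (mul n s s) s = neg n s
    rw [h, neg_mul', one_mul']
  rwa [he] at hm

end Q

/-- Every Cayley-Dickson loop `Q n` is Hamiltonian: every subloop `S` is normal,
i.e. `xS = Sx`, `(xS)y = x(Sy)` and `x(yS) = (xy)S` for all `x, y ∈ Q n`. -/
theorem Q.hamiltonian (n : ℕ) (S : Q.Subloop n) (x y : Q n) :
    (fun s => x * s) '' S.carrier = (fun s => s * x) '' S.carrier ∧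
    (fun s => (x * s) * y) '' S.carrier = (fun s => x * (s * y)) '' S.carrier ∧
    (fun s => x * (y * s)) '' S.carrier = (fun s => (x * y) * s) '' S.carrier := by
  have md : ∀ a b : Q n, a * b = mul n a b := fun _ _ => rfl
  refine ⟨?_, ?_, ?_⟩
  · ext a
    simp only [Set.mem_image, md]
    constructor
    · rintro ⟨s, hs, rfl⟩
      rcases comm2 n x s with h | h
      · exact ⟨s, hs, h.symm⟩
      · rcases sq n s with h1 | h1 | h1
        · exact ⟨s, hs, by rw [h1, one_mul', mul_one']⟩
        · exact ⟨s, hs, by rw [h1]; simp only [neg_mul', mul_neg', one_mul', mul_one']⟩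
        · exact ⟨neg n s, neg_mem_of S hs h1, by rw [neg_mul', h]⟩
    · rintro ⟨s, hs, rfl⟩
      rcases comm2 n s x with h | h
      · exact ⟨s, hs, h.symm⟩
      · rcases sq n s with h1 | h1 | h1
        · exact ⟨s, hs, by rw [h1, one_mul', mul_one']⟩
        · exact ⟨s, hs, by rw [h1]; simp only [neg_mul', mul_neg', one_mul', mul_one']⟩
        · exact ⟨neg n s, neg_mem_of S hs h1, by rw [mul_neg', h]⟩
  · ext a
    simp only [Set.mem_image, md]
    constructor
    · rintro ⟨s, hs, rfl⟩
      rcases assoc2 n x s y with h | h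
      · exact ⟨s, hs, h.symm⟩
      · rcases sq n s with h1 | h1 | h1
        · exact ⟨s, hs, by rw [h1]; simp only [one_mul', mul_one']⟩
        · exact ⟨s, hs, by rw [h1]; simp only [neg_mul', mul_neg', one_mul', mul_one']⟩
        · exact ⟨neg n s, neg_mem_of S hs h1, by
            simp only [neg_mul', mul_neg']; rw [h]⟩
    · rintro ⟨s, hs, rfl⟩
      rcases assoc2 n x s y with h | h
      · exact ⟨s, hs, h⟩
      · rcases sq n s with h1 | h1 | h1
        · exact ⟨s, hs, by rw [h1]; simp only [one_mul', mul_one']⟩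
        · exact ⟨s, hs, by rw [h1]; simp only [neg_mul', mul_neg', one_mul', mul_one']⟩
        · exact ⟨neg n s, neg_mem_of S hs h1, by
            simp only [neg_mul', mul_neg']; rw [h, neg_neg']⟩
  · ext a
    simp only [Set.mem_image, md]
    constructor
    · rintro ⟨s, hs, rfl⟩
      rcases assoc2 n x y s with h | h
      · exact ⟨s, hs, h⟩
      · rcases sq n s with h1 | h1 | h1
        · exact ⟨s, hs, by rw [h1]; simp only [one_mul', mul_one']⟩
        · exact ⟨s, hs, by rw [h1]; simp only [neg_mul', mul_neg', one_mul', mul_one']⟩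
        · exact ⟨neg n s, neg_mem_of S hs h1, by
            simp only [neg_mul', mul_neg']; rw [h, neg_neg']⟩
    · rintro ⟨s, hs, rfl⟩
      rcases assoc2 n x y s with h | h
      · exact ⟨s, hs, h.symm⟩
      · rcases sq n s with h1 | h1 | h1
        · exact ⟨s, hs, by rw [h1]; simp only [one_mul', mul_one']⟩
        · exact ⟨s, hs, by rw [h1]; simp only [neg_mul', mul_neg', one_mul', mul_one']⟩
        · exact ⟨neg n s, neg_mem_of S hs h1, by
            simp only [neg_mul', mul_neg']; rw [h]⟩
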